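/- Let ℓ₁ < 0 < ℓ₂ and δ > 0. There exist C > 0 and N ∈ ℕ such that for every integer n ≥ N and every p ∈ ℂ with ℓ₁ + δ < Re p < ℓ₂ − δ and Im p < 0: | ∫_{ℓ₁}^{ℓ₂} e^{−nt²}/(t−p) dt + πi·e^{−np²}·erfc(i√n·p) | ≤ C·(e^{−nℓ₁²} + e^{−nℓ₂²})/n, where the integral is over the real segment [ℓ₁, ℓ₂] (since Im p < 0, the pole p lies strictly below, i.e. to the right of, this path). -/

import Mathlib

open scoped BigOperators Real
open ComplexConjugate

noncomputable def cerfc (w : ℂ) : ℂ :=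
  1 - (2 / Real.sqrt Real.pi) * ∫ t in (0:ℝ)..(1:ℝ), w * Complex.exp (-((t : ℂ) * w) ^ 2)

section SteepestDescentAux
open MeasureTheory Set Complex Filter

lemma integral_cexp_Ioi {c : ℂ} (hc : c.re < 0) :
    ∫ ξ in Set.Ioi (0:ℝ), Complex.exp (c * ξ) = -1 / c := by
  have hc0 : c ≠ 0 := fun h => by simp [h] at hc
  have hint : IntegrableOn (fun ξ : ℝ => Complex.exp (c * ξ)) (Ioi 0) := by
    apply Integrable.mono' ((exp_neg_integrableOn_Ioi 0 (b := -c.re) (by linarith)))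
    · exact (Complex.continuous_exp.comp (continuous_const.mul Complex.continuous_ofReal)).aestronglyMeasurable
    · filter_upwards with ξ
      simp [Complex.norm_exp, mul_comm]
  have key := integral_Ioi_of_hasDerivAt_of_tendsto' (a := 0)
    (f := fun ξ : ℝ => Complex.exp (c * ξ) / c) (f' := fun ξ : ℝ => Complex.exp (c * ξ))
    (m := 0) ?_ hint ?_
  · rw [neg_div, one_div]; simpa [Complex.exp_zero] using key
  · intro x _
    have h1 : HasDerivAt (fun ξ : ℝ => Complex.exp (c * ξ)) (c * Complex.exp (c * x)) x := by
      have := ((Complex.hasDerivAt_exp (c * x)).comp x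
        ((hasDerivAt_id (x:ℂ)).const_mul c).comp_ofReal)
      simpa [mul_comm, Function.comp_def] using this
    simpa [mul_div_assoc, mul_div_cancel_left₀ _ hc0] using h1.div_const c
  · have : Tendsto (fun ξ : ℝ => ‖Complex.exp (c * ξ) / c‖) atTop (nhds 0) := by
      simp only [norm_div, Complex.norm_exp]
      have : Tendsto (fun ξ : ℝ => Real.exp (c.re * ξ)) atTop (nhds 0) := by
        apply Real.tendsto_exp_atBot.comp
        exact Tendsto.const_mul_atTop_of_neg hc tendsto_id
      simpa [mul_comm] using this.div_const (‖c‖)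
    rw [show (0:ℂ) = 0 from rfl]
    exact tendsto_zero_iff_norm_tendsto_zero.2 (by simpa using this)

lemma aux_abs_exp (x c : ℝ) (hc : 0 ≤ c) :
    (|x| + 2*c) * Real.exp (-x^2) ≤ (1+2*c) * Real.exp (-(1/2)*x^2) := by
  rw [show -(1/2)*x^2 = -(x^2/2) by ring]
  set E := Real.exp (-(x^2/2)) with hE
  have hE0 : 0 < E := Real.exp_pos _
  have hE1 : E ≤ 1 := Real.exp_le_one_iff.mpr (by nlinarith [sq_nonneg x])
  have hx : |x| ≤ Real.exp (x^2/2) := by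
    nlinarith [Real.add_one_le_exp (x^2/2), _root_.sq_abs x, sq_nonneg (|x|-1)]
  have h1 : |x| * E ≤ 1 := by
    have hp := Real.exp_pos (x^2/2)
    have : |x| / Real.exp (x^2/2) ≤ 1 := (div_le_one hp).mpr hx
    simpa [hE, Real.exp_neg, div_eq_mul_inv] using this
  have e2 : Real.exp (-x^2) = E * E := by
    rw [hE, ← Real.exp_add]; ring_nf
  rw [e2]
  have t1 : |x| * E * E ≤ 1 * E := mul_le_mul_of_nonneg_right h1 hE0.le
  have hE2 : E * E ≤ E := by nlinarith
  nlinarith [mul_le_mul_of_nonneg_left hE2 (by linarith : (0:ℝ) ≤ 2*c)]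

lemma re_bound (u : ℝ) (hu : 0 ≤ u) (z : ℂ) (c : ℝ) (h1 : |z.re| ≤ c) (h2 : |z.im| ≤ c) :
    (u - c)^2 - 2*c^2 ≤ ((((u:ℝ) : ℂ) + z)^2).re := by
  have e1 : ((((u:ℝ) : ℂ) + z)^2).re = (u + z.re)^2 - z.im^2 := by
    simp [pow_two, Complex.mul_re]
  rw [e1]
  obtain ⟨a1, a2⟩ := abs_le.mp h1
  obtain ⟨b1, b2⟩ := abs_le.mp h2
  nlinarith [mul_nonneg hu (by linarith : (0:ℝ) ≤ z.re + c), sq_nonneg z.re, sq_nonneg z.im]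

lemma integrable_shift_gauss (z : ℂ) :
    IntegrableOn (fun u : ℝ => Complex.exp (-(((u:ℝ):ℂ) + z)^2)) (Ioi 0) := by
  have h : (fun u : ℝ => Complex.exp (-(((u:ℝ):ℂ) + z)^2))
      = fun u : ℝ => Complex.exp (-1*((u:ℝ):ℂ)^2 + (-2*z)*((u:ℝ):ℂ) + (-z^2)) := by
    funext u; congr 1; ring
  rw [h]
  exact (integrable_cexp_quadratic (by norm_num) (-2*z) (-z^2)).integrableOn

lemma gaussian_shift (w : ℂ) :
    ∫ u in Set.Ioi (0:ℝ), Complex.exp (-(((u:ℝ):ℂ) + w)^2)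
      = ((Real.sqrt Real.pi / 2 : ℝ) : ℂ)
        - ∫ t in (0:ℝ)..1, w * Complex.exp (-(((t:ℝ):ℂ) * w)^2) := by
  set F : ℝ → ℂ := fun s =>
    (∫ u in Set.Ioi (0:ℝ), Complex.exp (-(((u:ℝ):ℂ) + (s:ℂ)*w)^2))
      + ∫ v in (0:ℝ)..s, w * Complex.exp (-(((v:ℝ):ℂ)*w)^2) with hF_def
  have hF : ∀ s₀ : ℝ, HasDerivAt F 0 s₀ := by
    intro s₀
    set M : ℝ := |s₀| + 1 with hM
    set c : ℝ := M * ‖w‖ with hc_def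
    have hM0 : 0 < M := by positivity
    have hc : 0 ≤ c := by positivity
    set F' : ℝ → ℝ → ℂ := fun s u =>
      Complex.exp (-(((u:ℝ):ℂ) + (s:ℂ)*w)^2) * (-(2*(((u:ℝ):ℂ)+(s:ℂ)*w)*w)) with hF'_def
    set bound : ℝ → ℝ := fun u =>
      (2 * ‖w‖ * Real.exp (2*c^2)) * ((1+2*c) * Real.exp (-(1/2)*(u - c)^2)) with hbound_def
    -- derivative in s of the integrand
    have hderiv_s : ∀ (s u : ℝ),
        HasDerivAt (fun s : ℝ => Complex.exp (-(((u:ℝ):ℂ) + (s:ℂ)*w)^2)) (F' s u) s := by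
      intro s u
      have h1 : HasDerivAt (fun z : ℂ => ((u:ℝ):ℂ) + z*w) w (s:ℂ) := by
        simpa using ((hasDerivAt_id (s:ℂ)).mul_const w).const_add (((u:ℝ):ℂ))
      have h4 := ((h1.pow 2).neg).cexp.comp_ofReal
      simpa [hF'_def, pow_one, mul_comm, mul_left_comm, mul_assoc] using h4
    -- norm bound for F' on the ball
    have hkey : ∀ s : ℝ, |s| ≤ M → ∀ u : ℝ, 0 ≤ u → ‖F' s u‖ ≤ bound u := by
      intro s hs u hu
      have hre : |((s:ℂ)*w).re| ≤ c := by
        calc |((s:ℂ)*w).re| ≤ ‖(s:ℂ)*w‖ := Complex.abs_re_le_norm _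
        _ = |s| * ‖w‖ := by simp [map_mul]
        _ ≤ M * ‖w‖ := by gcongr
      have him : |((s:ℂ)*w).im| ≤ c := by
        calc |((s:ℂ)*w).im| ≤ ‖(s:ℂ)*w‖ := Complex.abs_im_le_norm _
        _ = |s| * ‖w‖ := by simp [map_mul]
        _ ≤ M * ‖w‖ := by gcongr
      have hRe := re_bound u hu ((s:ℂ)*w) c hre him
      have habs : ‖((u:ℝ):ℂ) + (s:ℂ)*w‖ ≤ |u - c| + 2*c := by
        calc ‖((u:ℝ):ℂ) + (s:ℂ)*w‖
            ≤ ‖((u:ℝ):ℂ)‖ + ‖(s:ℂ)*w‖ := norm_add_le _ _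
        _ ≤ u + c := by
            rw [Complex.norm_real, Real.norm_eq_abs, _root_.abs_of_nonneg hu]
            gcongr
            calc ‖(s:ℂ)*w‖ = |s| * ‖w‖ := by simp [map_mul]
            _ ≤ M * ‖w‖ := by gcongr
        _ ≤ |u - c| + 2*c := by
            rcases abs_cases (u - c) with ⟨h, _⟩ | ⟨h, _⟩ <;> linarith
      have hexp : Real.exp (-((((u:ℝ):ℂ) + (s:ℂ)*w)^2).re)
          ≤ Real.exp (2*c^2) * Real.exp (-(u-c)^2) := by
        rw [← Real.exp_add]
        apply Real.exp_le_exp.mpr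
        linarith
      have : ‖F' s u‖
          = Real.exp (-((((u:ℝ):ℂ) + (s:ℂ)*w)^2).re)
            * (2 * ‖((u:ℝ):ℂ)+(s:ℂ)*w‖ * ‖w‖) := by
        simp [hF'_def, map_mul, Complex.norm_exp, map_neg_eq_map]
      rw [this]
      calc Real.exp (-((((u:ℝ):ℂ) + (s:ℂ)*w)^2).re)
            * (2 * ‖((u:ℝ):ℂ)+(s:ℂ)*w‖ * ‖w‖)
          ≤ (Real.exp (2*c^2) * Real.exp (-(u-c)^2)) * (2 * (|u - c| + 2*c) * ‖w‖) := by
            apply mul_le_mul hexp ?_ (by positivity) (by positivity)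
            gcongr
        _ = (2 * ‖w‖ * Real.exp (2*c^2)) * ((|u-c| + 2*c) * Real.exp (-(u-c)^2)) := by
            ring
        _ ≤ bound u := by
            rw [hbound_def]
            apply mul_le_mul_of_nonneg_left ?_ (by positivity)
            have := aux_abs_exp (u - c) c hc
            simpa using this
    -- apply dominated derivative theorem
    have main := _root_.hasDerivAt_integral_of_dominated_loc_of_deriv_le (𝕜 := ℝ)
      (μ := volume.restrict (Ioi (0:ℝ))) (x₀ := s₀)
      (F := fun s u => Complex.exp (-(((u:ℝ):ℂ) + (s:ℂ)*w)^2)) (F' := F')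
      (bound := bound) (s := Metric.ball s₀ 1) (Metric.ball_mem_nhds s₀ one_pos)
      (Eventually.of_forall fun s => (integrable_shift_gauss ((s:ℂ)*w)).aestronglyMeasurable)
      (integrable_shift_gauss ((s₀:ℂ)*w))
      ?_ ?_ ?_ ?_
    · obtain ⟨hint', hd1⟩ := main
      -- compute the integral of F' s₀
      have hFTC : ∫ u in Set.Ioi (0:ℝ), F' s₀ u = 0 - w * Complex.exp (-(((0:ℝ):ℂ)+(s₀:ℂ)*w)^2) := by
        apply integral_Ioi_of_hasDerivAt_of_tendsto'
          (f := fun u : ℝ => w * Complex.exp (-(((u:ℝ):ℂ) + (s₀:ℂ)*w)^2))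
        · intro x _
          have h1 : HasDerivAt (fun z : ℂ => z + (s₀:ℂ)*w) 1 (x:ℂ) := by
            simpa using (hasDerivAt_id ((x:ℝ):ℂ)).add_const ((s₀:ℂ)*w)
          have h4 := ((((h1.pow 2).neg).cexp).const_mul w).comp_ofReal
          convert h4 using 1
          · rfl
          · rfl
          simp [hF'_def, pow_one]
          ring
        · exact hint'
        · have hb : ∀ᶠ u : ℝ in atTop,
              ‖w * Complex.exp (-(((u:ℝ):ℂ) + (s₀:ℂ)*w)^2)‖
                ≤ ‖w‖ * (Real.exp (2*c^2) * Real.exp (-(u-c)^2)) := by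
            filter_upwards [eventually_ge_atTop (0:ℝ)] with u hu
            have hre : |((s₀:ℂ)*w).re| ≤ c := by
              calc |((s₀:ℂ)*w).re| ≤ ‖(s₀:ℂ)*w‖ := Complex.abs_re_le_norm _
              _ = |s₀| * ‖w‖ := by simp [map_mul]
              _ ≤ M * ‖w‖ := by gcongr; linarith
            have him : |((s₀:ℂ)*w).im| ≤ c := by
              calc |((s₀:ℂ)*w).im| ≤ ‖(s₀:ℂ)*w‖ := Complex.abs_im_le_norm _
              _ = |s₀| * ‖w‖ := by simp [map_mul]
              _ ≤ M * ‖w‖ := by gcongr; linarith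
            have hRe := re_bound u hu ((s₀:ℂ)*w) c hre him
            rw [norm_mul, Complex.norm_exp]
            gcongr
            rw [← Real.exp_add]
            apply Real.exp_le_exp.mpr
            simp only [Complex.neg_re]
            linarith
          apply squeeze_zero_norm' hb
          rw [show (0:ℝ) = ‖w‖ * (Real.exp (2*c^2) * 0) by ring]
          apply Tendsto.const_mul
          apply Tendsto.const_mul
          apply Real.tendsto_exp_atBot.comp
          apply Filter.tendsto_neg_atTop_atBot.comp
          exact (tendsto_pow_atTop two_ne_zero).comp
            (tendsto_atTop_add_const_right _ (-c) tendsto_id)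
      -- derivative of second part
      have hd2 : HasDerivAt (fun s : ℝ => ∫ v in (0:ℝ)..s, w * Complex.exp (-(((v:ℝ):ℂ)*w)^2))
          (w * Complex.exp (-(((s₀:ℝ):ℂ)*w)^2)) s₀ := by
        have hcont : Continuous (fun v : ℝ => w * Complex.exp (-(((v:ℝ):ℂ)*w)^2)) := by
          fun_prop
        exact (hcont.integral_hasStrictDerivAt 0 s₀).hasDerivAt
      have := hd1.add hd2
      rw [hFTC] at this
      convert this using 1
      · rfl
      · rfl
      simp
    · exact (Continuous.aestronglyMeasurable (by fun_prop)).restrict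
    · filter_upwards [ae_restrict_mem measurableSet_Ioi] with u hu s hsball
      have hs : |s| ≤ M := by
        have h1 : |s - s₀| < 1 := by simpa [Real.dist_eq] using (Metric.mem_ball.mp hsball)
        calc |s| = |s₀ + (s - s₀)| := by ring_nf
        _ ≤ |s₀| + |s - s₀| := abs_add_le _ _
        _ ≤ M := by rw [hM]; linarith
      simpa using hkey s hs u (le_of_lt hu)
    · have : Integrable (fun u : ℝ => Real.exp (-(1/2) * u^2)) :=
        integrable_exp_neg_mul_sq (by norm_num)
      exact (((this.comp_sub_right c).const_mul _).const_mul _).integrableOn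
    · filter_upwards with u
      intro s _
      exact hderiv_s s u
  have hconst := is_const_of_deriv_eq_zero (𝕜 := ℝ)
    (fun s => (hF s).differentiableAt) (fun s => (hF s).deriv) 1 0
  have hF0 : F 0 = ((Real.sqrt Real.pi / 2 : ℝ) : ℂ) := by
    rw [hF_def]
    simp only [intervalIntegral.integral_same, add_zero]
    have heq : ∀ u : ℝ, Complex.exp (-(((u:ℝ):ℂ) + ((0:ℝ):ℂ)*w)^2)
        = ((Real.exp (-1*u^2) : ℝ) : ℂ) := by
      intro u
      rw [Complex.ofReal_exp]
      congr 1
      push_cast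
      ring
    simp_rw [heq]
    rw [show ((Real.sqrt Real.pi/2 : ℝ):ℂ) = ((∫ x in Ioi (0:ℝ), Real.exp (-1*x^2) : ℝ) : ℂ) by
      rw [integral_gaussian_Ioi 1]; norm_num]
    exact _root_.integral_ofReal
  have h01 : F 1 = F 0 := hconst
  rw [hF0] at h01
  have hF1 : F 1 = (∫ u in Set.Ioi (0:ℝ), Complex.exp (-(((u:ℝ):ℂ) + w)^2))
      + ∫ t in (0:ℝ)..1, w * Complex.exp (-(((t:ℝ):ℂ)*w)^2) := by
    rw [hF_def]
    norm_num
  rw [hF1] at h01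
  linear_combination h01

theorem key_identity (a : ℝ) (ha : 0 < a) (p : ℂ) (hp : p.im < 0) :
    ∫ t : ℝ, Complex.exp (-(a:ℂ) * (t:ℂ)^2) / ((t:ℂ) - p)
      = -((Real.pi : ℂ) * Complex.I * Complex.exp (-(a:ℂ)*p^2) *
          cerfc (Complex.I * ((Real.sqrt a : ℝ) : ℂ) * p)) := by
  have hsa0 : (0:ℝ) < Real.sqrt a := Real.sqrt_pos.mpr ha
  have hsa : ((Real.sqrt a:ℝ):ℂ)^2 = (a:ℂ) := by
    rw [← Complex.ofReal_pow, Real.sq_sqrt ha.le]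
  have hsaC : ((Real.sqrt a:ℝ):ℂ) ≠ 0 := by
    simpa using hsa0.ne'
  set f : ℝ → ℝ → ℂ := fun t ξ =>
    Complex.exp (-(a:ℂ) * (t:ℂ)^2) * Complex.exp (Complex.I*((t:ℂ)-p)*(ξ:ℂ)) with hf_def
  -- step 1 : pointwise identity in t
  have step1 : ∀ t : ℝ, Complex.exp (-(a:ℂ) * (t:ℂ)^2) / ((t:ℂ) - p)
      = -Complex.I * ∫ ξ in Set.Ioi (0:ℝ), f t ξ := by
    intro t
    have hre : (Complex.I*((t:ℂ)-p)).re < 0 := by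
      simp [Complex.mul_re, Complex.sub_im]
      linarith
    rw [hf_def]
    simp only
    rw [MeasureTheory.integral_const_mul]
    have := integral_cexp_Ioi hre
    simp_rw [mul_assoc] at this ⊢
    rw [this]
    have hz : ((t:ℂ) - p) ≠ 0 := by
      intro h
      have : ((t:ℂ) - p).im = 0 := by rw [h]; simp
      simp [Complex.sub_im] at this
      linarith [this]
    field_simp
    try simp [Complex.I_sq]
    try ring
  -- integrability on the product
  have hprod : Integrable (Function.uncurry f)
      ((volume : Measure ℝ).prod ((volume : Measure ℝ).restrict (Ioi 0))) := by
    have int1 : Integrable (fun t : ℝ => Real.exp (-a * t^2)) := integrable_exp_neg_mul_sq ha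
    have int2 : IntegrableOn (fun ξ : ℝ => Real.exp (p.im * ξ)) (Ioi 0) := by
      have := exp_neg_integrableOn_Ioi 0 (b := -p.im) (by linarith)
      simpa using this
    have hsep := int1.mul_prod int2
    apply Integrable.mono' hsep
    · apply Continuous.aestronglyMeasurable
      apply Continuous.mul <;> fun_prop
    · filter_upwards with z
      rw [Function.uncurry, hf_def]
      simp only [norm_mul, Complex.norm_exp]
      have r1 : (-(a:ℂ) * ((z.1:ℝ):ℂ)^2).re = -a * z.1^2 := by
        rw [show (-(a:ℂ) * ((z.1:ℝ):ℂ)^2) = ((-a * z.1^2 : ℝ) : ℂ) by push_cast; ring,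
          Complex.ofReal_re]
      have r2 : (Complex.I*(((z.1:ℝ):ℂ)-p)*((z.2:ℝ):ℂ)).re = p.im * z.2 := by
        simp [Complex.mul_re, Complex.mul_im, Complex.sub_re, Complex.sub_im]
        try ring
      rw [r1, r2]
  -- swap
  have swap := MeasureTheory.integral_integral_swap (f := f) hprod
  -- inner integral over t via Fourier-Gauss
  have step2 : ∀ ξ : ℝ, ξ ∈ Ioi (0:ℝ) → (∫ t : ℝ, f t ξ)
      = Complex.exp (-Complex.I*p*ξ) *
        (((Real.pi/a : ℝ):ℂ) ^ (1/2 : ℂ) * Complex.exp (-(ξ:ℂ)^2/(4*a))) := by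
    intro ξ _
    have key := fourierIntegral_gaussian (b := (a:ℂ)) (by simpa using ha) ((ξ:ℂ))
    calc (∫ t : ℝ, f t ξ)
        = ∫ t : ℝ, Complex.exp (-Complex.I*p*ξ) *
            (Complex.exp (Complex.I*(ξ:ℂ)*(t:ℂ)) * Complex.exp (-(a:ℂ)*(t:ℂ)^2)) := by
          congr 1; funext t
          rw [hf_def]
          simp only
          rw [← Complex.exp_add, ← Complex.exp_add, ← Complex.exp_add]
          congr 1
          ring
      _ = Complex.exp (-Complex.I*p*ξ) *
            ∫ t : ℝ, Complex.exp (Complex.I*(ξ:ℂ)*(t:ℂ)) * Complex.exp (-(a:ℂ)*(t:ℂ)^2) :=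
          MeasureTheory.integral_const_mul _ _
      _ = _ := by
          rw [key]
          push_cast
          ring_nf
  set w : ℂ := Complex.I * ((Real.sqrt a : ℝ) : ℂ) * p with hw_def
  set s : ℂ := ((Real.sqrt a:ℝ):ℂ) with hs_def
  -- exponent completion of the square
  have hexp : ∀ ξ : ℝ, Complex.exp (-Complex.I*p*ξ) * Complex.exp (-(ξ:ℂ)^2/(4*a))
      = Complex.exp (-(a:ℂ)*p^2) *
        Complex.exp (-((((1/(2*Real.sqrt a) * ξ : ℝ)):ℂ) + w)^2) := by
    intro ξ
    rw [← Complex.exp_add, ← Complex.exp_add]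
    congr 1
    have hcast : ((((1/(2*Real.sqrt a) * ξ : ℝ)):ℂ)) = (ξ:ℂ)/(2*s) := by
      rw [hs_def]; push_cast; ring
    rw [hcast, hw_def, ← hsa]
    linear_combination (s^2*p^2) * Complex.I_sq + (Complex.I*p*(ξ:ℂ)) * (mul_inv_cancel₀ hsaC)
  -- scaling of the half-line Gaussian
  have hb2 : (0:ℝ) < 1/(2*Real.sqrt a) := by positivity
  have hscale := integral_comp_mul_left_Ioi
    (g := fun u : ℝ => Complex.exp (-(((u:ℝ):ℂ) + w)^2)) 0 hb2
  simp only [mul_zero] at hscale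
  -- the constant
  have hcpow : (((Real.pi/a : ℝ)):ℂ) ^ (1/2 : ℂ) = ((Real.sqrt (Real.pi/a) : ℝ):ℂ) := by
    rw [show ((1/2 : ℂ)) = ((1/2 : ℝ):ℂ) by norm_num]
    rw [← Complex.ofReal_cpow (by positivity)]
    norm_cast
    rw [Real.sqrt_eq_rpow]
  -- assemble
  have hπ : (0:ℝ) < Real.sqrt Real.pi := Real.sqrt_pos.mpr Real.pi_pos
  calc ∫ t : ℝ, Complex.exp (-(a:ℂ) * (t:ℂ)^2) / ((t:ℂ) - p)
      = ∫ t : ℝ, -Complex.I * ∫ ξ in Set.Ioi (0:ℝ), f t ξ := by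
        congr 1; funext t; exact step1 t
    _ = -Complex.I * ∫ t : ℝ, ∫ ξ in Set.Ioi (0:ℝ), f t ξ := MeasureTheory.integral_const_mul _ _
    _ = -Complex.I * ∫ ξ in Set.Ioi (0:ℝ), ∫ t : ℝ, f t ξ := by rw [swap]
    _ = -Complex.I * ∫ ξ in Set.Ioi (0:ℝ), Complex.exp (-Complex.I*p*ξ) *
          ((((Real.pi/a : ℝ)):ℂ) ^ (1/2 : ℂ) * Complex.exp (-(ξ:ℂ)^2/(4*a))) := by
        congr 1
        exact MeasureTheory.setIntegral_congr_fun measurableSet_Ioi step2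
    _ = -Complex.I * ((((Real.pi/a : ℝ)):ℂ) ^ (1/2 : ℂ) *
          ∫ ξ in Set.Ioi (0:ℝ), Complex.exp (-Complex.I*p*ξ) * Complex.exp (-(ξ:ℂ)^2/(4*a))) := by
        congr 1
        rw [← MeasureTheory.integral_const_mul]
        apply MeasureTheory.setIntegral_congr_fun measurableSet_Ioi
        intro ξ _
        ring
    _ = -Complex.I * ((((Real.pi/a : ℝ)):ℂ) ^ (1/2 : ℂ) * (Complex.exp (-(a:ℂ)*p^2) *
          ∫ ξ in Set.Ioi (0:ℝ), Complex.exp (-((((1/(2*Real.sqrt a) * ξ : ℝ)):ℂ) + w)^2))) := by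
        congr 2
        rw [← MeasureTheory.integral_const_mul]
        apply MeasureTheory.setIntegral_congr_fun measurableSet_Ioi
        intro ξ _
        exact hexp ξ
    _ = -Complex.I * ((((Real.pi/a : ℝ)):ℂ) ^ (1/2 : ℂ) * (Complex.exp (-(a:ℂ)*p^2) *
          ((2*Real.sqrt a : ℝ) • ∫ u in Set.Ioi (0:ℝ), Complex.exp (-(((u:ℝ):ℂ) + w)^2)))) := by
        rw [hscale, show ((1:ℝ)/(2*Real.sqrt a))⁻¹ = (2*Real.sqrt a : ℝ) from by field_simp]
    _ = -((Real.pi : ℂ) * Complex.I * Complex.exp (-(a:ℂ)*p^2) * cerfc w) := by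
        rw [gaussian_shift w]
        have hcer : ((Real.sqrt Real.pi / 2 : ℝ) : ℂ)
            - (∫ t in (0:ℝ)..1, w * Complex.exp (-(((t:ℝ):ℂ) * w)^2))
            = ((Real.sqrt Real.pi / 2 : ℝ) : ℂ) * cerfc w := by
          rw [cerfc]
          have : ((Real.sqrt Real.pi : ℝ):ℂ) ≠ 0 := by
            simpa using hπ.ne'
          field_simp
          push_cast
          ring
        rw [hcer, hcpow, Complex.real_smul]
        have hrconst : Real.sqrt (Real.pi/a) * (2*Real.sqrt a) * (Real.sqrt Real.pi / 2)
            = Real.pi := by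
          rw [Real.sqrt_div Real.pi_pos.le]
          have h2 : Real.sqrt Real.pi * Real.sqrt Real.pi = Real.pi :=
            Real.mul_self_sqrt Real.pi_pos.le
          field_simp
          nlinarith [h2, hsa0]
        rw [show (((Real.sqrt (Real.pi/a) : ℝ)):ℂ) * (Complex.exp (-(a:ℂ)*p^2) *
              (((2*Real.sqrt a : ℝ):ℂ) * (((Real.sqrt Real.pi / 2 : ℝ) : ℂ) * cerfc w)))
            = ((Real.sqrt (Real.pi/a) * (2*Real.sqrt a) * (Real.sqrt Real.pi / 2) : ℝ) : ℂ)
              * (Complex.exp (-(a:ℂ)*p^2) * cerfc w) by push_cast; ring]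
        rw [hrconst]
        ring

lemma integrable_main (a : ℝ) (ha : 0 < a) (p : ℂ) (hp : p.im ≠ 0) :
    Integrable (fun t : ℝ => Complex.exp (-(a:ℂ) * (t:ℂ)^2) / ((t:ℂ) - p)) := by
  have hne : ∀ t : ℝ, ((t:ℂ) - p) ≠ 0 := by
    intro t h
    have : ((t:ℂ) - p).im = 0 := by rw [h]; simp
    simp [Complex.sub_im] at this
    exact hp (by linarith)
  have hcont : Continuous (fun t : ℝ => Complex.exp (-(a:ℂ) * (t:ℂ)^2) / ((t:ℂ) - p)) := by
    apply Continuous.div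
    · fun_prop
    · fun_prop
    · exact hne
  apply Integrable.mono' ((integrable_exp_neg_mul_sq ha).mul_const (1/|p.im|))
  · exact hcont.aestronglyMeasurable
  · filter_upwards with t
    rw [norm_div]
    have h1 : ‖Complex.exp (-(a:ℂ) * (t:ℂ)^2)‖ = Real.exp (-a*t^2) := by
      rw [Complex.norm_exp]
      congr 1
      rw [show (-(a:ℂ) * ((t:ℝ):ℂ)^2) = ((-a * t^2 : ℝ) : ℂ) by push_cast; ring,
        Complex.ofReal_re]
    have h2 : |p.im| ≤ ‖(t:ℂ) - p‖ := by
      have := Complex.abs_im_le_norm ((t:ℂ) - p)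
      simpa [Complex.sub_im] using this
    rw [h1]
    rw [div_eq_mul_inv, mul_one_div, div_eq_mul_inv]
    gcongr

lemma gauss_tail (a l : ℝ) (ha : 0 < a) (hl : 0 < l) :
    ∫ t in Ioi l, Real.exp (-a*t^2) ≤ Real.exp (-a*l^2)/(2*a*l) := by
  have hb : (0:ℝ) < 2*a*l := by positivity
  have hint2 : IntegrableOn (fun t : ℝ => Real.exp (-a*l^2 + 2*a*l^2) * Real.exp (-(2*a*l)*t))
      (Ioi l) := (exp_neg_integrableOn_Ioi l hb).const_mul _
  have step : ∫ t in Ioi l, Real.exp (-a*t^2)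
      ≤ ∫ t in Ioi l, Real.exp (-a*l^2 + 2*a*l^2) * Real.exp (-(2*a*l)*t) := by
    apply setIntegral_mono_on (integrable_exp_neg_mul_sq ha).integrableOn hint2 measurableSet_Ioi
    intro t ht
    rw [← Real.exp_add]
    apply Real.exp_le_exp.mpr
    have := sq_nonneg (t - l)
    have htl : l < t := ht
    nlinarith
  have hval : ∫ t in Ioi l, Real.exp (-(2*a*l)*t) = (2*a*l)⁻¹ * Real.exp (-(2*a*l*l)) := by
    have := integral_comp_mul_left_Ioi (g := fun x : ℝ => Real.exp (-x)) l hb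
    simp only [smul_eq_mul] at this
    calc ∫ t in Ioi l, Real.exp (-(2*a*l)*t) = ∫ t in Ioi l, Real.exp (-(2*a*l*t)) := by
          congr 1; funext t; ring_nf
      _ = (2*a*l)⁻¹ * ∫ x in Ioi (2*a*l*l), Real.exp (-x) := this
      _ = (2*a*l)⁻¹ * Real.exp (-(2*a*l*l)) := by rw [integral_exp_neg_Ioi]
  calc ∫ t in Ioi l, Real.exp (-a*t^2)
      ≤ ∫ t in Ioi l, Real.exp (-a*l^2 + 2*a*l^2) * Real.exp (-(2*a*l)*t) := step
    _ = Real.exp (-a*l^2 + 2*a*l^2) * ∫ t in Ioi l, Real.exp (-(2*a*l)*t) :=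
        integral_const_mul _ _
    _ = Real.exp (-a*l^2 + 2*a*l^2) * ((2*a*l)⁻¹ * Real.exp (-(2*a*l*l))) := by rw [hval]
    _ = Real.exp (-a*l^2)/(2*a*l) := by
        rw [mul_comm ((2*a*l)⁻¹) _, ← mul_assoc, ← Real.exp_add]
        rw [div_eq_mul_inv]
        congr 2
        ring

lemma gauss_tail_left (a l : ℝ) (ha : 0 < a) (hl : l < 0) :
    ∫ t in Iic l, Real.exp (-a*t^2) ≤ Real.exp (-a*l^2)/(2*a*(-l)) := by
  have h := integral_comp_neg_Ioi (c := -l) (f := fun t : ℝ => Real.exp (-a*t^2))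
  simp only [neg_neg] at h
  have heq : ∫ t in Iic l, Real.exp (-a*t^2) = ∫ t in Ioi (-l), Real.exp (-a*t^2) := by
    rw [← h]
    congr 1; funext t; ring_nf
  rw [heq]
  have := gauss_tail a (-l) ha (by linarith)
  calc ∫ t in Ioi (-l), Real.exp (-a*t^2) ≤ Real.exp (-a*(-l)^2)/(2*a*(-l)) := this
    _ = Real.exp (-a*l^2)/(2*a*(-l)) := by ring_nf

lemma norm_cexp_gauss (a t : ℝ) : ‖Complex.exp (-(a:ℂ) * ((t:ℝ):ℂ)^2)‖ = Real.exp (-a*t^2) := by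
  rw [Complex.norm_exp]
  congr 1
  rw [show (-(a:ℂ) * ((t:ℝ):ℂ)^2) = ((-a * t^2 : ℝ) : ℂ) by push_cast; ring,
    Complex.ofReal_re]

lemma tail_right (a : ℝ) (ha : 0 < a) (p : ℂ) (l δ : ℝ) (hl : 0 < l) (hδ : 0 < δ)
    (hpre : p.re < l - δ) (him : p.im < 0) :
    ‖∫ t in Ioi l, Complex.exp (-(a:ℂ) * (t:ℂ)^2) / ((t:ℂ) - p)‖
      ≤ (1/δ) * (Real.exp (-a*l^2)/(2*a*l)) := by
  have hIntOn := (integrable_main a ha p him.ne).integrableOn (s := Ioi l)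
  calc ‖∫ t in Ioi l, Complex.exp (-(a:ℂ) * (t:ℂ)^2) / ((t:ℂ) - p)‖
      ≤ ∫ t in Ioi l, ‖Complex.exp (-(a:ℂ) * (t:ℂ)^2) / ((t:ℂ) - p)‖ :=
        norm_integral_le_integral_norm _
    _ ≤ ∫ t in Ioi l, (1/δ) * Real.exp (-a*t^2) := by
        apply setIntegral_mono_on hIntOn.norm
          (((integrable_exp_neg_mul_sq ha).const_mul _).integrableOn) measurableSet_Ioi
        intro t ht
        have htl : l < t := ht
        have h2 : δ ≤ ‖(t:ℂ) - p‖ := by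
          calc δ ≤ t - p.re := by linarith
            _ ≤ |((t:ℂ)-p).re| := by
                rw [Complex.sub_re, Complex.ofReal_re]; exact le_abs_self _
            _ ≤ ‖(t:ℂ)-p‖ := by exact Complex.abs_re_le_norm _
        rw [norm_div, norm_cexp_gauss, div_eq_mul_inv, one_div, mul_comm (δ⁻¹) _]
        gcongr
        all_goals first | exact hδ | exact h2
    _ = (1/δ) * ∫ t in Ioi l, Real.exp (-a*t^2) := integral_const_mul _ _
    _ ≤ (1/δ) * (Real.exp (-a*l^2)/(2*a*l)) := by
        apply mul_le_mul_of_nonneg_left (gauss_tail a l ha hl) (by positivity)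

lemma tail_left (a : ℝ) (ha : 0 < a) (p : ℂ) (l δ : ℝ) (hl : l < 0) (hδ : 0 < δ)
    (hpre : l + δ < p.re) (him : p.im < 0) :
    ‖∫ t in Iic l, Complex.exp (-(a:ℂ) * (t:ℂ)^2) / ((t:ℂ) - p)‖
      ≤ (1/δ) * (Real.exp (-a*l^2)/(2*a*(-l))) := by
  have hIntOn := (integrable_main a ha p him.ne).integrableOn (s := Iic l)
  calc ‖∫ t in Iic l, Complex.exp (-(a:ℂ) * (t:ℂ)^2) / ((t:ℂ) - p)‖
      ≤ ∫ t in Iic l, ‖Complex.exp (-(a:ℂ) * (t:ℂ)^2) / ((t:ℂ) - p)‖ :=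
        norm_integral_le_integral_norm _
    _ ≤ ∫ t in Iic l, (1/δ) * Real.exp (-a*t^2) := by
        apply setIntegral_mono_on hIntOn.norm
          (((integrable_exp_neg_mul_sq ha).const_mul _).integrableOn) measurableSet_Iic
        intro t ht
        have htl : t ≤ l := ht
        have h2 : δ ≤ ‖(t:ℂ) - p‖ := by
          calc δ ≤ p.re - t := by linarith
            _ ≤ |((t:ℂ)-p).re| := by
                rw [Complex.sub_re, Complex.ofReal_re]
                rw [abs_sub_comm]
                exact le_abs_self _
            _ ≤ ‖(t:ℂ)-p‖ := by exact Complex.abs_re_le_norm _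
        rw [norm_div, norm_cexp_gauss, div_eq_mul_inv, one_div, mul_comm (δ⁻¹) _]
        gcongr
        all_goals first | exact hδ | exact h2
    _ = (1/δ) * ∫ t in Iic l, Real.exp (-a*t^2) := integral_const_mul _ _
    _ ≤ (1/δ) * (Real.exp (-a*l^2)/(2*a*(-l))) := by
        apply mul_le_mul_of_nonneg_left (gauss_tail_left a l ha hl) (by positivity)

/-- Steepest descent for a Gaussian with a pole coalescing with the saddle point:
the complementary error function emerges. -/
theorem stmt_10 (l₁ l₂ δ : ℝ) (hl₁ : l₁ < 0) (hl₂ : 0 < l₂) (hδ : 0 < δ) :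
    ∃ (C : ℝ) (N : ℕ), 0 < C ∧
      ∀ n : ℕ, N ≤ n → ∀ p : ℂ, l₁ + δ < p.re → p.re < l₂ - δ → p.im < 0 →
        ‖(∫ t in l₁..l₂, Complex.exp (-(n : ℂ) * (t : ℂ) ^ 2) / ((t : ℂ) - p)) +
            Real.pi * Complex.I * Complex.exp (-(n : ℂ) * p ^ 2) *
              cerfc (Complex.I * (Real.sqrt n : ℂ) * p)‖ ≤
          C * (Real.exp (-(n : ℝ) * l₁ ^ 2) + Real.exp (-(n : ℝ) * l₂ ^ 2)) / n := by
  have hml₁ : (0:ℝ) < -l₁ := by linarith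
  refine ⟨(1/δ) * (1/(2*(-l₁)) + 1/(2*l₂)), 1,
    mul_pos (by positivity) (add_pos (one_div_pos.mpr (by linarith)) (one_div_pos.mpr (by linarith))), ?_⟩
  intro n hn p hp1 hp2 hp3
  have hn0 : (0:ℝ) < (n:ℝ) := by exact_mod_cast Nat.lt_of_lt_of_le Nat.zero_lt_one hn
  set a : ℝ := (n:ℝ) with ha_def
  have hcast : ((a:ℝ):ℂ) = (n:ℂ) := by push_cast; rfl
  set f : ℝ → ℂ := fun t : ℝ => Complex.exp (-(a:ℂ) * (t:ℂ)^2) / ((t:ℂ) - p) with hf_def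
  have hint := integrable_main a hn0 p hp3.ne
  have e1 : ∫ t in l₁..l₂, f t = (∫ t in Iic l₂, f t) - ∫ t in Iic l₁, f t :=
    (intervalIntegral.integral_Iic_sub_Iic hint.integrableOn hint.integrableOn).symm
  have e2 : (∫ t in Iic l₂, f t) + (∫ t in Ioi l₂, f t) = ∫ t, f t :=
    intervalIntegral.integral_Iic_add_Ioi hint.integrableOn hint.integrableOn
  have hkey := key_identity a hn0 p hp3
  have hmain : (∫ t in l₁..l₂, f t) +
      (Real.pi : ℂ) * Complex.I * Complex.exp (-(a:ℂ) * p ^ 2) *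
        cerfc (Complex.I * ((Real.sqrt a : ℝ) : ℂ) * p)
      = -((∫ t in Iic l₁, f t) + (∫ t in Ioi l₂, f t)) := by
    rw [e1]
    have e3 : (∫ t in Iic l₂, f t) = (∫ t : ℝ, f t) - ∫ t in Ioi l₂, f t := by
      linear_combination e2
    rw [e3, hkey]
    ring
  have hgoal_eq : ((∫ t in l₁..l₂, Complex.exp (-(n : ℂ) * (t : ℂ) ^ 2) / ((t : ℂ) - p)) +
            Real.pi * Complex.I * Complex.exp (-(n : ℂ) * p ^ 2) *
              cerfc (Complex.I * (Real.sqrt n : ℂ) * p))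
      = -((∫ t in Iic l₁, f t) + (∫ t in Ioi l₂, f t)) := by
    rw [← hmain]
    simp only [hf_def, ← hcast]
    rfl
  rw [hgoal_eq]
  rw [norm_neg]
  have hT1 := tail_left a hn0 p l₁ δ hl₁ hδ hp1 hp3
  have hT2 := tail_right a hn0 p l₂ δ hl₂ hδ hp2 hp3
  set E₁ : ℝ := Real.exp (-a * l₁^2) with hE1
  set E₂ : ℝ := Real.exp (-a * l₂^2) with hE2
  have hb1 : ‖∫ t in Iic l₁, f t‖ ≤ (1/δ) * (1/(2*(-l₁))) * (E₁ / a) := by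
    refine hT1.trans (le_of_eq ?_)
    field_simp
    try ring
    try tauto
  have hb2 : ‖∫ t in Ioi l₂, f t‖ ≤ (1/δ) * (1/(2*l₂)) * (E₂ / a) := by
    refine hT2.trans (le_of_eq ?_)
    field_simp
    try ring
    try tauto
  have hE1p : 0 < E₁ := Real.exp_pos _
  have hE2p : 0 < E₂ := Real.exp_pos _
  calc ‖(∫ t in Iic l₁, f t) + (∫ t in Ioi l₂, f t)‖
      ≤ ‖∫ t in Iic l₁, f t‖ + ‖∫ t in Ioi l₂, f t‖ := norm_add_le _ _
    _ ≤ (1/δ) * (1/(2*(-l₁))) * (E₁ / a) + (1/δ) * (1/(2*l₂)) * (E₂ / a) := by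
        linarith
    _ ≤ (1/δ) * (1/(2*(-l₁)) + 1/(2*l₂)) * ((E₁ + E₂) / a) := by
        have hA : (0:ℝ) < 1/(2*(-l₁)) := one_div_pos.mpr (by linarith)
        have hB : (0:ℝ) < 1/(2*l₂) := one_div_pos.mpr (by linarith)
        have h0 : (0:ℝ) ≤ (1/δ) := by positivity
        have hEa1 : (0:ℝ) ≤ E₁/a := by positivity
        have hEa2 : (0:ℝ) ≤ E₂/a := by positivity
        have h1 : (1/δ) * (1/(2*(-l₁))) * (E₁ / a) ≤ (1/δ) * (1/(2*(-l₁)) + 1/(2*l₂)) * (E₁ / a) :=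
          mul_le_mul_of_nonneg_right (mul_le_mul_of_nonneg_left (by linarith) h0) hEa1
        have h2 : (1/δ) * (1/(2*l₂)) * (E₂ / a) ≤ (1/δ) * (1/(2*(-l₁)) + 1/(2*l₂)) * (E₂ / a) :=
          mul_le_mul_of_nonneg_right (mul_le_mul_of_nonneg_left (by linarith) h0) hEa2
        have h3 : (1/δ) * (1/(2*(-l₁)) + 1/(2*l₂)) * (E₁ / a)
            + (1/δ) * (1/(2*(-l₁)) + 1/(2*l₂)) * (E₂ / a)
            = (1/δ) * (1/(2*(-l₁)) + 1/(2*l₂)) * ((E₁ + E₂) / a) := by ring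
        linarith
    _ = (1/δ) * (1/(2*(-l₁)) + 1/(2*l₂)) * (E₁ + E₂) / a := by ring

end SteepestDescentAux
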